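/- Let G be a nonnegative symmetric matrix, and M, N nonnegative matrices such that G is the entrywise (Hadamard) product of M and N, i.e., G[x,y] = M[x,y]·N[x,y] for all x,y. Then the spectral norm of G satisfies λ(G) ≤ max over pairs (x,y) with G[x,y] > 0 of r_x(M)·c_y(N), where r_x(M) is the ℓ₂-norm of the x-th row of M and c_y(N) is the ℓ₂-norm of the y-th column of N. -/

import Mathlib

/-- Spectral norm (largest singular value) of a real matrix. -/
noncomputable def specNorm {n : Type*} [Fintype n] [DecidableEq n] (M : Matrix n n ℝ) : ℝ :=
  ‖Matrix.toEuclideanCLM (𝕜 := ℝ) M‖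

open scoped RealInnerProductSpace in
set_option maxHeartbeats 1000000 in
/-- Mathias' lemma: if `G = M ∘ N` entrywise, then
`λ(G) ≤ max_{x,y : G[x,y] > 0} r_x(M) c_y(N)`. -/
theorem stmt_5 {n : Type*} [Fintype n] [DecidableEq n]
    (G M N : Matrix n n ℝ)
    (hG : ∀ x y, 0 ≤ G x y) (hsym : G.IsSymm)
    (hM : ∀ x y, 0 ≤ M x y) (hN : ∀ x y, 0 ≤ N x y)
    (hprod : ∀ x y, G x y = M x y * N x y) :
    specNorm G ≤ ⨆ p : {p : n × n // 0 < G p.1 p.2},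
      Real.sqrt (∑ z, M p.1.1 z ^ 2) * Real.sqrt (∑ z, N z p.1.2 ^ 2) := by
  classical
  set K := (⨆ p : {p : n × n // 0 < G p.1 p.2},
      Real.sqrt (∑ z, M p.1.1 z ^ 2) * Real.sqrt (∑ z, N z p.1.2 ^ 2)) with hKdef
  have hbdd : BddAbove (Set.range fun p : {p : n × n // 0 < G p.1 p.2} =>
      Real.sqrt (∑ z, M p.1.1 z ^ 2) * Real.sqrt (∑ z, N z p.1.2 ^ 2)) :=
    Set.Finite.bddAbove (Set.finite_range _)
  have hK0 : 0 ≤ K := by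
    rcases isEmpty_or_nonempty {p : n × n // 0 < G p.1 p.2} with h | h
    · rw [hKdef, Real.iSup_of_isEmpty]
    · obtain ⟨p⟩ := h
      refine le_trans ?_ (le_ciSup hbdd p)
      positivity
  have hKle : ∀ x y, 0 < G x y →
      Real.sqrt (∑ z, M x z ^ 2) * Real.sqrt (∑ z, N z y ^ 2) ≤ K := fun x y h =>
    le_ciSup hbdd ⟨(x, y), h⟩
  set T := Matrix.toEuclideanCLM (𝕜 := ℝ) G with hT
  -- entries of T a
  have hTapp : ∀ (a : EuclideanSpace ℝ n) (i : n), (T a) i = ∑ j, G i j * a j := by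
    intro a i
    have := congrFun (Matrix.ofLp_toEuclideanCLM (𝕜 := ℝ) G a) i
    rw [this]
    simp [Matrix.toLin'_apply, Matrix.mulVec, dotProduct]
  have hnorm : ∀ a : EuclideanSpace ℝ n, ‖a‖ ^ 2 = ∑ i, a i ^ 2 := by
    intro a
    rw [← real_inner_self_eq_norm_sq]
    simp only [PiLp.inner_apply, RCLike.inner_apply, conj_trivial, sq]
  -- key bilinear bound
  have key : ∀ a b : EuclideanSpace ℝ n,
      ⟪T a, b⟫ ≤ K / 2 * (‖a‖ ^ 2 + ‖b‖ ^ 2) := by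
    intro a b
    have hinner : ⟪T a, b⟫ = ∑ x, ∑ y, G x y * a y * b x := by
      rw [PiLp.inner_apply]
      refine Finset.sum_congr rfl fun x _ => ?_
      rw [RCLike.inner_apply, starRingEnd_apply, star_trivial, hTapp, Finset.mul_sum]
      exact Finset.sum_congr rfl fun y _ => by ring
    set R : n → ℝ := fun x => ∑ z, M x z ^ 2 with hR
    set C : n → ℝ := fun y => ∑ z, N z y ^ 2 with hC
    have hR0 : ∀ x, 0 ≤ R x := fun x => Finset.sum_nonneg fun z _ => sq_nonneg _
    have hC0 : ∀ y, 0 ≤ C y := fun y => Finset.sum_nonneg fun z _ => sq_nonneg _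
    have term : ∀ x y, G x y * a y * b x ≤
        K / (2 * R x) * (M x y ^ 2 * b x ^ 2) + K / (2 * C y) * (N x y ^ 2 * a y ^ 2) := by
      intro x y
      rcases lt_or_eq_of_le (hG x y) with hpos | hzero
      · -- G x y > 0
        have hpos' := hpos
        rw [hprod] at hpos'
        have hMN := mul_pos_iff.1 hpos'
        have hMpos : 0 < M x y := by
          rcases hMN with ⟨h1, _⟩ | ⟨h1, _⟩
          · exact h1
          · linarith [hM x y]
        have hNpos : 0 < N x y := by
          rcases hMN with ⟨_, h2⟩ | ⟨_, h2⟩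
          · exact h2
          · linarith [hN x y]
        have hRpos : 0 < R x :=
          Finset.sum_pos' (fun z _ => sq_nonneg _) ⟨y, Finset.mem_univ y, by positivity⟩
        have hCpos : 0 < C y :=
          Finset.sum_pos' (fun z _ => sq_nonneg _) ⟨x, Finset.mem_univ x, by positivity⟩
        have hrc : Real.sqrt (R x) * Real.sqrt (C y) ≤ K := hKle x y hpos
        have hsr : Real.sqrt (R x) ^ 2 = R x := Real.sq_sqrt (hR0 x)
        have hsc : Real.sqrt (C y) ^ 2 = C y := Real.sq_sqrt (hC0 y)
        have hsrpos : 0 < Real.sqrt (R x) := Real.sqrt_pos.2 hRpos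
        have hscpos : 0 < Real.sqrt (C y) := Real.sqrt_pos.2 hCpos
        -- step 1 : AM-GM with weights
        have step1 : G x y * a y * b x ≤
            Real.sqrt (C y) / (2 * Real.sqrt (R x)) * (M x y ^ 2 * b x ^ 2)
            + Real.sqrt (R x) / (2 * Real.sqrt (C y)) * (N x y ^ 2 * a y ^ 2) := by
          rw [div_mul_eq_mul_div, div_mul_eq_mul_div, div_add_div _ _ (by positivity) (by positivity),
            le_div_iff₀ (by positivity), hprod]
          nlinarith [sq_nonneg (Real.sqrt (C y) * (M x y * b x) - Real.sqrt (R x) * (N x y * a y)),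
            mul_pos hsrpos hscpos, sq_nonneg (M x y * b x + N x y * a y),
            sq_nonneg (M x y * b x - N x y * a y)]
        refine step1.trans (add_le_add ?_ ?_)
        · refine mul_le_mul_of_nonneg_right ?_ (by positivity)
          rw [div_le_div_iff₀ (by positivity) (by positivity)]
          nlinarith [mul_le_mul_of_nonneg_right hrc hsrpos.le, hsr]
        · refine mul_le_mul_of_nonneg_right ?_ (by positivity)
          rw [div_le_div_iff₀ (by positivity) (by positivity)]
          nlinarith [mul_le_mul_of_nonneg_right hrc hscpos.le, hsc]
      · -- G x y = 0
        rw [← hzero]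
        have h1 : (0:ℝ) ≤ K / (2 * R x) * (M x y ^ 2 * b x ^ 2) := by positivity
        have h2 : (0:ℝ) ≤ K / (2 * C y) * (N x y ^ 2 * a y ^ 2) := by positivity
        nlinarith
    have rowsum : ∀ x, ∑ y, K / (2 * R x) * (M x y ^ 2 * b x ^ 2) ≤ K / 2 * b x ^ 2 := by
      intro x
      have : ∑ y, K / (2 * R x) * (M x y ^ 2 * b x ^ 2)
          = K / (2 * R x) * (R x * b x ^ 2) := by
        rw [← Finset.mul_sum, ← Finset.sum_mul]
      rw [this]
      rcases lt_or_eq_of_le (hR0 x) with h | h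
      · have : K / (2 * R x) * (R x * b x ^ 2) = K / 2 * b x ^ 2 := by
          field_simp
        rw [this]
      · rw [← h]
        have : (0:ℝ) ≤ K / 2 * b x ^ 2 := by positivity
        simpa using this
    have colsum : ∀ y, ∑ x, K / (2 * C y) * (N x y ^ 2 * a y ^ 2) ≤ K / 2 * a y ^ 2 := by
      intro y
      have : ∑ x, K / (2 * C y) * (N x y ^ 2 * a y ^ 2)
          = K / (2 * C y) * (C y * a y ^ 2) := by
        rw [← Finset.mul_sum, ← Finset.sum_mul]
      rw [this]
      rcases lt_or_eq_of_le (hC0 y) with h | h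
      · have : K / (2 * C y) * (C y * a y ^ 2) = K / 2 * a y ^ 2 := by
          field_simp
        rw [this]
      · rw [← h]
        have : (0:ℝ) ≤ K / 2 * a y ^ 2 := by positivity
        simpa using this
    calc ⟪T a, b⟫ = ∑ x, ∑ y, G x y * a y * b x := hinner
      _ ≤ ∑ x, ∑ y, (K / (2 * R x) * (M x y ^ 2 * b x ^ 2)
            + K / (2 * C y) * (N x y ^ 2 * a y ^ 2)) :=
          Finset.sum_le_sum fun x _ => Finset.sum_le_sum fun y _ => term x y
      _ = (∑ x, ∑ y, K / (2 * R x) * (M x y ^ 2 * b x ^ 2))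
            + ∑ y, ∑ x, K / (2 * C y) * (N x y ^ 2 * a y ^ 2) := by
          have hc : (∑ x, ∑ y, K / (2 * C y) * (N x y ^ 2 * a y ^ 2))
              = ∑ y, ∑ x, K / (2 * C y) * (N x y ^ 2 * a y ^ 2) := Finset.sum_comm
          rw [← hc, ← Finset.sum_add_distrib]
          exact Finset.sum_congr rfl fun x _ => Finset.sum_add_distrib
      _ ≤ (∑ x, K / 2 * b x ^ 2) + ∑ y, K / 2 * a y ^ 2 :=
          add_le_add (Finset.sum_le_sum fun x _ => rowsum x)
            (Finset.sum_le_sum fun y _ => colsum y)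
      _ = K / 2 * (‖a‖ ^ 2 + ‖b‖ ^ 2) := by
          rw [← Finset.mul_sum, ← Finset.mul_sum, hnorm a, hnorm b]; ring
  -- conclude the operator norm bound
  refine ContinuousLinearMap.opNorm_le_bound T hK0 fun a => ?_
  rcases eq_or_ne (T a) 0 with h0 | h0
  · rw [h0, norm_zero]; positivity
  have ha0 : a ≠ 0 := by
    rintro rfl; exact h0 (map_zero T)
  have hTa : 0 < ‖T a‖ := norm_pos_iff.2 h0
  have haa : 0 < ‖a‖ := norm_pos_iff.2 ha0
  set b : EuclideanSpace ℝ n := (‖a‖ / ‖T a‖) • (T a) with hb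
  have hbnorm : ‖b‖ = ‖a‖ := by
    rw [hb, norm_smul, Real.norm_eq_abs, abs_of_nonneg (by positivity), div_mul_cancel₀]
    exact hTa.ne'
  have hib : ⟪T a, b⟫ = ‖a‖ / ‖T a‖ * ‖T a‖ ^ 2 := by
    rw [hb, real_inner_smul_right, real_inner_self_eq_norm_sq]
  have := key a b
  rw [hib, hbnorm] at this
  have h1 : ‖a‖ * ‖T a‖ ≤ K * ‖a‖ ^ 2 := by
    have h2 : ‖a‖ / ‖T a‖ * ‖T a‖ ^ 2 = ‖a‖ * ‖T a‖ := by
      field_simp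
    nlinarith [this, h2]
  nlinarith [h1, haa]
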